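/- Every finitely generated module in which every submodule is virtually semisimple (i.e., every finitely generated completely virtually semisimple module) is a finite direct sum of virtually simple modules. -/

import Mathlib

def VirtuallySemisimple (R : Type*) [Ring R] (M : Type*) [AddCommGroup M] [Module R M] : Prop :=
  ∀ N : Submodule R M, ∃ N' : Submodule R M, (∃ C : Submodule R M, IsCompl N' C) ∧
    Nonempty (N ≃ₗ[R] N')

def VirtuallySimple (R : Type*) [Ring R] (M : Type*) [AddCommGroup M] [Module R M] : Prop :=
  Nontrivial M ∧ ∀ N : Submodule R M, N ≠ ⊥ → Nonempty (N ≃ₗ[R] M)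

section Aux

variable {R : Type*} [Ring R] {M M₂ : Type*} [AddCommGroup M] [Module R M]
  [AddCommGroup M₂] [Module R M₂]

/-- A uniform module: nontrivial, and any two nonzero submodules intersect nontrivially. -/
def IsUnifMod (R : Type*) [Ring R] (M : Type*) [AddCommGroup M] [Module R M] : Prop :=
  Nontrivial M ∧ ∀ A B : Submodule R M, A ≠ ⊥ → B ≠ ⊥ → A ⊓ B ≠ ⊥

lemma nontrivial_congr (e : M ≃ₗ[R] M₂) (h : Nontrivial M) : Nontrivial M₂ :=
  e.symm.toEquiv.nontrivial

lemma vss_congr (e : M ≃ₗ[R] M₂) (h : VirtuallySemisimple R M) : VirtuallySemisimple R M₂ := by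
  intro N
  obtain ⟨N', ⟨C, hC⟩, ⟨f⟩⟩ := h (N.map (e.symm : M₂ →ₗ[R] M))
  refine ⟨N'.map (e : M →ₗ[R] M₂), ⟨C.map (e : M →ₗ[R] M₂), ?_⟩, ?_⟩
  · have := (Submodule.orderIsoMapComap (e : M ≃ₗ[R] M₂)).isCompl hC
    simpa using this
  · exact ⟨(e.symm.submoduleMap N).trans (f.trans (e.submoduleMap N'))⟩

lemma unif_congr (e : M ≃ₗ[R] M₂) (h : IsUnifMod R M) : IsUnifMod R M₂ := by
  obtain ⟨hnt, hu⟩ := h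
  refine ⟨nontrivial_congr e hnt, fun A B hA hB hAB => ?_⟩
  let o : Submodule R M₂ ≃o Submodule R M := Submodule.orderIsoMapComap (e.symm : M₂ ≃ₗ[R] M)
  have hA' : o A ≠ ⊥ := fun hx => hA (o.injective (by simpa using hx))
  have hB' : o B ≠ ⊥ := fun hx => hB (o.injective (by simpa using hx))
  refine hu (o A) (o B) hA' hB' ?_
  rw [← o.map_inf, hAB]
  exact o.map_bot

lemma unif_vss_virtuallySimple (hu : IsUnifMod R M) (hv : VirtuallySemisimple R M) :
    VirtuallySimple R M := by
  obtain ⟨hnt, hu⟩ := hu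
  refine ⟨hnt, fun N hN => ?_⟩
  obtain ⟨N', ⟨C, hC⟩, ⟨f⟩⟩ := hv N
  have hN' : N' ≠ ⊥ :=
    Submodule.nontrivial_iff_ne_bot.mp
      (nontrivial_congr f (Submodule.nontrivial_iff_ne_bot.mpr hN))
  have hCbot : C = ⊥ := by
    by_contra hc
    exact hu N' C hN' hc (disjoint_iff.mp hC.disjoint)
  have hNtop : N' = ⊤ := by
    have := codisjoint_iff.mp hC.codisjoint
    rw [hCbot, sup_bot_eq] at this
    exact this
  exact ⟨f.trans ((LinearEquiv.ofEq _ _ hNtop).trans (Submodule.topEquiv))⟩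

lemma vss_noetherian (h : VirtuallySemisimple R M) [Module.Finite R M] : IsNoetherian R M := by
  rw [isNoetherian_def]
  intro s
  obtain ⟨N', ⟨C, hC⟩, ⟨f⟩⟩ := h s
  have e1 : (M ⧸ C) ≃ₗ[R] N' := Submodule.quotientEquivOfIsCompl C N' hC.symm
  have h1 : Module.Finite R N' := Module.Finite.equiv e1
  have h2 : Module.Finite R s := Module.Finite.equiv f.symm
  exact Module.Finite.iff_fg.mp h2

/-- Every nonzero submodule of a Noetherian module contains a nonzero uniform submodule. -/
lemma exists_unif_submodule (R : Type*) [Ring R] (M : Type*) [AddCommGroup M] [Module R M]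
    [IsNoetherian R M] [Nontrivial M] :
    ∃ U : Submodule R M, U ≠ ⊥ ∧ IsUnifMod R U := by
  have key : ∀ X : Submodule R M, ∀ N : Submodule R M, N ⊓ X = ⊥ → N ≠ ⊥ →
      ∃ U : Submodule R M, U ≤ N ∧ U ≠ ⊥ ∧ IsUnifMod R U := by
    intro X
    induction X using IsNoetherian.induction with
    | hgt X IH =>
      intro N hNX hN
      by_cases hu : ∀ A B : Submodule R M, A ≤ N → B ≤ N → A ≠ ⊥ → B ≠ ⊥ → A ⊓ B ≠ ⊥
      · refine ⟨N, le_rfl, hN, Submodule.nontrivial_iff_ne_bot.mpr hN, ?_⟩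
        intro A' B' hA' hB' hAB'
        have hinj : Function.Injective N.subtype := Submodule.injective_subtype N
        have hA : A'.map N.subtype ≠ ⊥ := by
          obtain ⟨x, hx, hx0⟩ := (Submodule.ne_bot_iff _).mp hA'
          exact (Submodule.ne_bot_iff _).mpr
            ⟨(x : M), Submodule.mem_map_of_mem hx, by simpa using hx0⟩
        have hB : B'.map N.subtype ≠ ⊥ := by
          obtain ⟨x, hx, hx0⟩ := (Submodule.ne_bot_iff _).mp hB'
          exact (Submodule.ne_bot_iff _).mpr
            ⟨(x : M), Submodule.mem_map_of_mem hx, by simpa using hx0⟩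
        have := hu (A'.map N.subtype) (B'.map N.subtype)
          (Submodule.map_subtype_le _ _) (Submodule.map_subtype_le _ _) hA hB
        rw [← Submodule.map_inf _ hinj, hAB', Submodule.map_bot] at this
        exact this rfl
      · push_neg at hu
        obtain ⟨A, B, hAN, hBN, hA, hB, hAB⟩ := hu
        have hXlt : X < X ⊔ A := by
          refine left_lt_sup.mpr fun hle => hA ?_
          have : A ≤ N ⊓ X := le_inf hAN hle
          rw [hNX] at this
          exact le_bot_iff.mp this
        have hBXA : B ⊓ (X ⊔ A) = ⊥ := by
          rw [eq_bot_iff]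
          rintro x ⟨hxB, hxXA⟩
          obtain ⟨y, hy, z, hz, rfl⟩ := Submodule.mem_sup.mp hxXA
          have h1 : y ∈ N := by
            have : y + z - z ∈ N := sub_mem (hBN hxB) (hAN hz)
            simpa using this
          have hy0 : y = 0 := by
            have : y ∈ N ⊓ X := ⟨h1, hy⟩
            rw [hNX] at this
            simpa using this
          subst hy0
          have : z ∈ A ⊓ B := ⟨hz, by simpa using hxB⟩
          rw [hAB] at this
          simpa using this
        obtain ⟨U, hUB, hU⟩ := IH (X ⊔ A) hXlt B hBXA hB
        exact ⟨U, hUB.trans hBN, hU⟩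
  have htop : (⊤ : Submodule R M) ≠ ⊥ :=
    Submodule.nontrivial_iff_ne_bot.mp (nontrivial_congr Submodule.topEquiv.symm ‹Nontrivial M›)
  obtain ⟨U, _, hU⟩ := key ⊥ ⊤ (by simp) htop
  exact ⟨U, hU⟩

lemma iSupIndep_fin_cons {α : Type*} [CompleteLattice α] [IsModularLattice α] {n : ℕ}
    {f : Fin n → α} {a : α} (hf : iSupIndep f) (ha : Disjoint a (⨆ i, f i)) :
    iSupIndep (Fin.cons a f) := by
  intro i
  induction i using Fin.cases with
  | zero =>
    refine Disjoint.mono_right ?_ ha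
    refine iSup_le fun j => iSup_le fun hj => ?_
    obtain ⟨k, rfl⟩ := Fin.eq_succ_of_ne_zero (by simpa using hj)
    simpa [Fin.cons_succ] using le_iSup f k
  | succ k =>
    have h1 : Disjoint (f k) (⨆ (j) (_ : j ≠ k), f j) := hf k
    have h2 : Disjoint (f k ⊔ ⨆ (j) (_ : j ≠ k), f j) a := by
      refine Disjoint.mono_left ?_ ha.symm
      exact sup_le (le_iSup f k) (iSup_le fun j => iSup_le fun _ => le_iSup f j)
    have h3 := h1.disjoint_sup_right_of_disjoint_sup_left h2
    refine Disjoint.mono_right ?_ (by simpa [Fin.cons_succ] using h3)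
    refine iSup_le fun j => iSup_le fun hj => ?_
    rcases eq_or_ne j 0 with rfl | hj0
    · simp [Fin.cons_zero]
    · obtain ⟨m, rfl⟩ := Fin.eq_succ_of_ne_zero hj0
      have hmk : m ≠ k := fun h => hj (by rw [h])
      refine le_trans ?_ le_sup_left
      simpa [Fin.cons_succ] using le_iSup₂ (f := fun (j : Fin n) (_ : j ≠ k) => f j) m hmk

end Aux

/-- Every finitely generated completely virtually semisimple module is a finite
direct sum of virtually simple modules. -/
theorem stmt17 (R : Type*) [Ring R] (M : Type*) [AddCommGroup M] [Module R M]
    [Module.Finite R M] (h : ∀ N : Submodule R M, VirtuallySemisimple R N) :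
    ∃ (n : ℕ) (V : Fin n → Submodule R M), iSupIndep V ∧ iSup V = ⊤ ∧
      ∀ i, VirtuallySimple R (V i) := by
  have hM : VirtuallySemisimple R M := vss_congr (Submodule.topEquiv) (h ⊤)
  have hNoeth : IsNoetherian R M := vss_noetherian hM
  set S : Set (Submodule R M) :=
    {N | (∃ D, IsCompl N D) ∧ ∃ n : ℕ, ∃ V : Fin n → Submodule R M, iSupIndep V ∧ iSup V = N ∧
      ∀ i, VirtuallySimple R (V i)} with hS
  have hbot : (⊥ : Submodule R M) ∈ S := by
    refine ⟨⟨⊤, isCompl_bot_top⟩, 0, Fin.elim0, fun i => i.elim0, ?_, fun i => i.elim0⟩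
    exact iSup_of_empty _
  obtain ⟨N, hN, hmax⟩ := (set_has_maximal_iff_noetherian.mpr hNoeth) S ⟨⊥, hbot⟩
  obtain ⟨⟨D, hD⟩, n, V, hind, hsup, hvs⟩ := hN
  by_cases hNtop : N = ⊤
  · exact ⟨n, V, hind, by rw [hsup, hNtop], hvs⟩
  · exfalso
    have hDbot : D ≠ ⊥ := fun hd => hNtop (by
      have := codisjoint_iff.mp hD.codisjoint
      rwa [hd, sup_bot_eq] at this)
    have hDnt : Nontrivial D := Submodule.nontrivial_iff_ne_bot.mpr hDbot
    have hDvss : VirtuallySemisimple R D := h D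
    obtain ⟨U₀, hU₀ne, hU₀unif⟩ := exists_unif_submodule R D
    obtain ⟨U₁, ⟨E, hE⟩, ⟨g⟩⟩ := hDvss U₀
    have hU₁ne : U₁ ≠ ⊥ :=
      Submodule.nontrivial_iff_ne_bot.mp
        (nontrivial_congr g (Submodule.nontrivial_iff_ne_bot.mpr hU₀ne))
    have hU₁unif : IsUnifMod R U₁ := unif_congr g hU₀unif
    set U' : Submodule R M := U₁.map D.subtype with hU'def
    set E' : Submodule R M := E.map D.subtype with hE'def
    have hinj : Function.Injective D.subtype := Submodule.injective_subtype D
    have hUD : U' ≤ D := Submodule.map_subtype_le _ _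
    have hED : E' ≤ D := Submodule.map_subtype_le _ _
    have hU'E' : U' ⊓ E' = ⊥ := by
      rw [← Submodule.map_inf _ hinj, disjoint_iff.mp hE.disjoint, Submodule.map_bot]
    have hU'E'sup : U' ⊔ E' = D := by
      rw [← Submodule.map_sup, codisjoint_iff.mp hE.codisjoint, Submodule.map_top,
        Submodule.range_subtype]
    have hU'ne : U' ≠ ⊥ := by
      obtain ⟨x, hx, hx0⟩ := (Submodule.ne_bot_iff _).mp hU₁ne
      exact (Submodule.ne_bot_iff _).mpr
        ⟨(x : M), Submodule.mem_map_of_mem hx, by simpa using hx0⟩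
    have hU'unif : IsUnifMod R U' :=
      unif_congr (Submodule.equivMapOfInjective D.subtype hinj U₁) hU₁unif
    have hU'vsimple : VirtuallySimple R U' := unif_vss_virtuallySimple hU'unif (h U')
    have hNU' : N ⊓ U' = ⊥ := by
      rw [eq_bot_iff]
      refine le_trans (inf_le_inf_left N hUD) ?_
      rw [disjoint_iff.mp hD.disjoint]
    have hcompl : IsCompl (N ⊔ U') E' := by
      constructor
      · rw [disjoint_iff, eq_bot_iff, ← hU'E']
        refine le_inf ?_ inf_le_right
        refine le_trans (inf_le_inf_left _ hED) ?_
        rw [sup_comm N U', sup_inf_assoc_of_le N hUD, disjoint_iff.mp hD.disjoint, sup_bot_eq]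
      · rw [codisjoint_iff, sup_assoc, hU'E'sup]
        exact codisjoint_iff.mp hD.codisjoint
    have hWind : iSupIndep (Fin.cons U' V : Fin (n + 1) → Submodule R M) := by
      refine iSupIndep_fin_cons hind ?_
      rw [hsup, disjoint_iff, inf_comm]
      exact hNU'
    have hWsup : (⨆ j, (Fin.cons U' V : Fin (n + 1) → Submodule R M) j) = N ⊔ U' := by
      apply le_antisymm
      · refine iSup_le fun j => ?_
        induction j using Fin.cases with
        | zero => simp [Fin.cons_zero]
        | succ k =>
          refine le_trans ?_ le_sup_left
          rw [← hsup]
          simpa [Fin.cons_succ] using le_iSup V k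
      · refine sup_le ?_ ?_
        · rw [← hsup]
          refine iSup_le fun k => ?_
          simpa [Fin.cons_succ] using le_iSup (Fin.cons U' V : Fin (n + 1) → Submodule R M) k.succ
        · simpa [Fin.cons_zero] using
            le_iSup (Fin.cons U' V : Fin (n + 1) → Submodule R M) 0
    have hmem : N ⊔ U' ∈ S := by
      refine ⟨⟨E', hcompl⟩, n + 1, Fin.cons U' V, hWind, hWsup, fun i => ?_⟩
      induction i using Fin.cases with
      | zero => exact hU'vsimple
      | succ k => exact hvs k
    refine hmax _ hmem ?_
    refine left_lt_sup.mpr fun hle => hU'ne ?_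
    rw [← hNU', eq_comm, inf_eq_right]
    exact hle
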